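/- Let (T1, T2) be a pair of commuting contractions on a complex Hilbert space H such that T = T1 T2 is a pure contraction, and suppose the closures of the ranges of D_{T1} and D_{T2} are finite dimensional. Then there exist a finite-dimensional complex Hilbert space E, a unitary U on E, an orthogonal projection P on E, and a linear isometry Γ : H → ℓ²(ℕ, E) such that Γ ∘ T1* = W_Φ* ∘ Γ, Γ ∘ T2* = W_Ψ* ∘ Γ, and Γ ∘ T* = S* ∘ Γ, where S is the unilateral shift on ℓ²(ℕ, E), W_Φ is the operator (W_Φ f)(0) = P U* f(0), (W_Φ f)(n) = P U* f(n) + (I−P) U* f(n−1) for n ≥ 1, and W_Ψ is the operator (W_Ψ f)(0) = U(I−P) f(0), (W_Ψ f)(n) = U(I−P) f(n) + U P f(n−1) for n ≥ 1. -/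

import Mathlib

open ContinuousLinearMap
open scoped ENNReal

set_option linter.unusedSectionVars false

noncomputable section

section ShiftOperator

variable {E : Type*} [NormedAddCommGroup E] [InnerProductSpace ℂ E]

/-- The right-shifted sequence: `(shiftFun f) 0 = 0`, `(shiftFun f) (n+1) = f n`. -/
def shiftFun (f : ℕ → E) : ℕ → E
  | 0 => 0
  | (n + 1) => f n

lemma summable_of_lp (f : lp (fun _ : ℕ => E) 2) :
    Summable fun n => ‖(f : ∀ _ : ℕ, E) n‖ ^ (2 : ℝ) := by
  have h := lp.memℓp f
  have h2 : (0 : ℝ) < (2 : ℝ≥0∞).toReal := by norm_num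
  simpa using (memℓp_gen_iff h2).mp h

lemma summable_shiftFun (f : lp (fun _ : ℕ => E) 2) :
    Summable fun n => ‖shiftFun (f : ∀ _ : ℕ, E) n‖ ^ (2 : ℝ) := by
  have h1 : Summable fun n => ‖shiftFun (f : ∀ _ : ℕ, E) (n + 1)‖ ^ (2 : ℝ) := by
    simpa [shiftFun] using summable_of_lp f
  exact (summable_nat_add_iff
    (f := fun n => ‖shiftFun ((f : ∀ _ : ℕ, E)) n‖ ^ (2 : ℝ)) 1).mp h1

lemma memℓp_shiftFun (f : lp (fun _ : ℕ => E) 2) : Memℓp (shiftFun (f : ∀ _ : ℕ, E)) 2 := by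
  apply memℓp_gen
  simpa using summable_shiftFun f

lemma norm_shift_eq (f : lp (fun _ : ℕ => E) 2)
    (g : lp (fun _ : ℕ => E) 2) (hg : (g : ∀ _ : ℕ, E) = shiftFun (f : ∀ _ : ℕ, E)) :
    ‖g‖ = ‖f‖ := by
  have h2 : (0 : ℝ) < (2 : ℝ≥0∞).toReal := by norm_num
  rw [lp.norm_eq_tsum_rpow h2 f, lp.norm_eq_tsum_rpow h2 g]
  congr 1
  have htsum : (∑' n, ‖shiftFun (f : ∀ _ : ℕ, E) n‖ ^ (2 : ℝ)) =
      ∑' n, ‖(f : ∀ _ : ℕ, E) n‖ ^ (2 : ℝ) := by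
    rw [(summable_shiftFun f).tsum_eq_zero_add]
    simp [shiftFun]
  simp only [hg]
  simpa using htsum

/-- The unilateral shift `S` on `ℓ²(ℕ, E)`: `(S f)(0) = 0` and `(S f)(n) = f (n-1)` for
`n ≥ 1`. -/
def shiftOp (E : Type*) [NormedAddCommGroup E] [InnerProductSpace ℂ E] :
    lp (fun _ : ℕ => E) 2 →L[ℂ] lp (fun _ : ℕ => E) 2 :=
  LinearMap.mkContinuous
    { toFun := fun f => ⟨shiftFun (f : ∀ _ : ℕ, E), memℓp_shiftFun f⟩
      map_add' := by
        intro f g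
        apply lp.ext
        funext n
        cases n <;> simp [shiftFun, lp.coeFn_add, Pi.add_apply] <;>
          first | exact (add_zero _).symm | rfl
      map_smul' := by
        intro c f
        apply lp.ext
        funext n
        cases n <;> simp [shiftFun, lp.coeFn_smul, Pi.smul_apply] }
    1
    (by
      intro f
      rw [one_mul]
      exact le_of_eq (norm_shift_eq f _ rfl))

@[simp] lemma shiftOp_apply_zero (f : lp (fun _ : ℕ => E) 2) :
    (shiftOp E f : ∀ _ : ℕ, E) 0 = 0 := rfl

@[simp] lemma shiftOp_apply_succ (f : lp (fun _ : ℕ => E) 2) (n : ℕ) :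
    (shiftOp E f : ∀ _ : ℕ, E) (n + 1) = (f : ∀ _ : ℕ, E) n := rfl

end ShiftOperator

section Defect

variable {H : Type*} [NormedAddCommGroup H] [InnerProductSpace ℂ H] [CompleteSpace H]

/-- The defect operator `D_T = (I - T T*)^{1/2}` of a contraction `T`. -/
def defect (T : H →L[ℂ] H) : H →L[ℂ] H :=
  CFC.sqrt (1 - T * adjoint T)

end Defect

section DefectClosure

variable {H : Type*} [NormedAddCommGroup H] [InnerProductSpace ℂ H] [CompleteSpace H]

/-- The closure of the range of the defect operator of `T`. -/
def defectClos (T : H →L[ℂ] H) : Submodule ℂ H :=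
  (LinearMap.range (defect T : H →ₗ[ℂ] H)).topologicalClosure

/-- `D_T x`, viewed as an element of the closure of the range of `D_T`. -/
def defectElem (T : H →L[ℂ] H) (x : H) : defectClos T :=
  ⟨defect T x, Submodule.le_topologicalClosure _ (LinearMap.mem_range_self (defect T : H →ₗ[ℂ] H) x)⟩

instance (T : H →L[ℂ] H) : CompleteSpace (defectClos T) :=
  (Submodule.isClosed_topologicalClosure _).completeSpace_coe

end DefectClosure

/-- `W` is the analytic (degree-one) Toeplitz operator on `ℓ²(ℕ, E)` with symbol
`φ(z) = a + z b`, i.e. `(W f)(0) = a (f 0)` and `(W f)(n) = a (f n) + b (f (n-1))`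
for `n ≥ 1`. -/
def IsToeplitz {E : Type*} [NormedAddCommGroup E] [InnerProductSpace ℂ E]
    (a b : E →L[ℂ] E)
    (W : lp (fun _ : ℕ => E) 2 →L[ℂ] lp (fun _ : ℕ => E) 2) : Prop :=
  ∀ f : lp (fun _ : ℕ => E) 2,
    (W f : ∀ _ : ℕ, E) 0 = a ((f : ∀ _ : ℕ, E) 0) ∧
    ∀ n : ℕ, (W f : ∀ _ : ℕ, E) (n + 1) =
      a ((f : ∀ _ : ℕ, E) (n + 1)) + b ((f : ∀ _ : ℕ, E) n)


/- ### Auxiliary machinery added for the proof ### -/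

set_option maxHeartbeats 2000000
set_option synthInstance.maxHeartbeats 400000

section Aux

lemma rpow_two_eq' (x : ℝ) : x ^ (2 : ℝ) = x ^ 2 := by
  rw [show (2:ℝ) = ((2:ℕ):ℝ) by norm_num, Real.rpow_natCast]

variable {E : Type*} [NormedAddCommGroup E] [InnerProductSpace ℂ E]

/-- The diagonal operator on `ℓ²(ℕ, E)` induced by `a : E →L[ℂ] E`. -/
def diagOp (a : E →L[ℂ] E) : lp (fun _ : ℕ => E) 2 →L[ℂ] lp (fun _ : ℕ => E) 2 :=
  LinearMap.mkContinuous
    { toFun := fun f => ⟨fun n => a ((f : ∀ _ : ℕ, E) n), by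
        apply memℓp_gen
        have h1 : ∀ n : ℕ, ‖a ((f : ∀ _ : ℕ, E) n)‖ ^ (2:ℝ) ≤
            ‖a‖ ^ (2:ℝ) * ‖(f : ∀ _ : ℕ, E) n‖ ^ (2:ℝ) := by
          intro n
          rw [← Real.mul_rpow (norm_nonneg _) (norm_nonneg _)]
          exact Real.rpow_le_rpow (norm_nonneg _) (a.le_opNorm _) (by norm_num)
        have h2 := (summable_of_lp f).mul_left (‖a‖ ^ (2:ℝ))
        exact (h2.of_nonneg_of_le (fun n => Real.rpow_nonneg (norm_nonneg _) _) h1)⟩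
      map_add' := by
        intro f g; apply lp.ext; funext n
        simp [lp.coeFn_add, Pi.add_apply]
        rfl
      map_smul' := by
        intro c f; apply lp.ext; funext n
        simp [lp.coeFn_smul, Pi.smul_apply] }
    ‖a‖
    (by
      intro f
      have h2 : (0 : ℝ) < (2 : ℝ≥0∞).toReal := by norm_num
      rw [lp.norm_eq_tsum_rpow h2]
      simp only [LinearMap.coe_mk, AddHom.coe_mk]
      have h1 : ∀ n : ℕ, ‖a ((f : ∀ _ : ℕ, E) n)‖ ^ (2:ℝ) ≤
          ‖a‖ ^ (2:ℝ) * ‖(f : ∀ _ : ℕ, E) n‖ ^ (2:ℝ) := by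
        intro n
        rw [← Real.mul_rpow (norm_nonneg _) (norm_nonneg _)]
        exact Real.rpow_le_rpow (norm_nonneg _) (a.le_opNorm _) (by norm_num)
      have hle : (∑' n, ‖a ((f : ∀ _ : ℕ, E) n)‖ ^ (2:ℝ)) ≤
          ‖a‖ ^ (2:ℝ) * ∑' n, ‖(f : ∀ _ : ℕ, E) n‖ ^ (2:ℝ) := by
        rw [← tsum_mul_left]
        exact Summable.tsum_le_tsum h1
          (((summable_of_lp f).mul_left (‖a‖ ^ (2:ℝ))).of_nonneg_of_le
            (fun n => Real.rpow_nonneg (norm_nonneg _) _) h1)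
          ((summable_of_lp f).mul_left _)
      simp only [ENNReal.toReal_ofNat, one_div]
      calc (∑' n, ‖a ((f : ∀ _ : ℕ, E) n)‖ ^ (2:ℝ)) ^ (2:ℝ)⁻¹
          ≤ (‖a‖ ^ (2:ℝ) * ∑' n, ‖(f : ∀ _ : ℕ, E) n‖ ^ (2:ℝ)) ^ (2:ℝ)⁻¹ := by
            apply Real.rpow_le_rpow _ hle _
            · exact tsum_nonneg fun n => Real.rpow_nonneg (norm_nonneg _) _
            · norm_num
        _ = ‖a‖ * ‖f‖ := by
            rw [Real.mul_rpow (Real.rpow_nonneg (norm_nonneg _) _)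
              (tsum_nonneg fun n => Real.rpow_nonneg (norm_nonneg _) _),
              ← Real.rpow_mul (norm_nonneg _), lp.norm_eq_tsum_rpow h2 f]
            simp only [ENNReal.toReal_ofNat, one_div]
            norm_num)

@[simp] lemma diagOp_apply (a : E →L[ℂ] E) (f : lp (fun _ : ℕ => E) 2) (n : ℕ) :
    (diagOp a f : ∀ _ : ℕ, E) n = a ((f : ∀ _ : ℕ, E) n) := rfl

/-- The analytic Toeplitz operator with symbol `a + z b`. -/
def toepOp (a b : E →L[ℂ] E) : lp (fun _ : ℕ => E) 2 →L[ℂ] lp (fun _ : ℕ => E) 2 :=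
  diagOp a + (shiftOp E).comp (diagOp b)

lemma toepOp_apply_zero (a b : E →L[ℂ] E) (f : lp (fun _ : ℕ => E) 2) :
    (toepOp a b f : ∀ _ : ℕ, E) 0 = a ((f : ∀ _ : ℕ, E) 0) := by
  simp [toepOp, lp.coeFn_add, Pi.add_apply]

lemma toepOp_apply_succ (a b : E →L[ℂ] E) (f : lp (fun _ : ℕ => E) 2) (n : ℕ) :
    (toepOp a b f : ∀ _ : ℕ, E) (n + 1) =
      a ((f : ∀ _ : ℕ, E) (n + 1)) + b ((f : ∀ _ : ℕ, E) n) := by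
  simp [toepOp, lp.coeFn_add, Pi.add_apply]

lemma isToeplitz_toepOp (a b : E →L[ℂ] E) : IsToeplitz a b (toepOp a b) :=
  fun f => ⟨toepOp_apply_zero a b f, toepOp_apply_succ a b f⟩

end Aux

section DefectFacts

variable {H : Type*} [NormedAddCommGroup H] [InnerProductSpace ℂ H] [CompleteSpace H]

lemma norm_adjoint_eq' (T : H →L[ℂ] H) : ‖adjoint T‖ = ‖T‖ :=
  LinearIsometryEquiv.norm_map adjoint T

lemma one_sub_mul_adjoint_nonneg {T : H →L[ℂ] H} (hT : ‖T‖ ≤ 1) :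
    (0:H →L[ℂ] H) ≤ 1 - T * adjoint T := by
  rw [ContinuousLinearMap.nonneg_iff_isPositive]
  constructor
  · exact (ContinuousLinearMap.isSelfAdjoint_iff_isSymmetric (A := 1 - T * adjoint T)).mp
      (by simp [IsSelfAdjoint, star_sub, star_one, star_mul, star_eq_adjoint, adjoint_adjoint])
  · intro x
    rw [ContinuousLinearMap.reApplyInnerSelf_apply]
    have h0 : (1 - T * adjoint T) x = x - T (adjoint T x) := by
      simp [ContinuousLinearMap.sub_apply, ContinuousLinearMap.mul_apply]
    have h1 : (inner ℂ (T (adjoint T x)) x : ℂ) = inner ℂ (adjoint T x) (adjoint T x) := by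
      rw [← ContinuousLinearMap.adjoint_inner_right]
    rw [h0, inner_sub_left, map_sub, h1, inner_self_eq_norm_sq (𝕜 := ℂ),
      inner_self_eq_norm_sq (𝕜 := ℂ)]
    have : ‖adjoint T x‖ ≤ ‖x‖ := by
      calc ‖adjoint T x‖ ≤ ‖adjoint T‖ * ‖x‖ := ContinuousLinearMap.le_opNorm _ _
      _ ≤ 1 * ‖x‖ := by gcongr; rw [norm_adjoint_eq']; exact hT
      _ = ‖x‖ := one_mul _
    nlinarith [norm_nonneg (adjoint T x), norm_nonneg x]

lemma defect_sq {T : H →L[ℂ] H} (hT : ‖T‖ ≤ 1) :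
    defect T * defect T = 1 - T * adjoint T :=
  CFC.sqrt_mul_sqrt_self _ (one_sub_mul_adjoint_nonneg hT)

lemma defect_isSelfAdjoint (T : H →L[ℂ] H) : IsSelfAdjoint (defect T) := by
  have := (ContinuousLinearMap.nonneg_iff_isPositive (defect T)).mp
    (CFC.sqrt_nonneg (a := 1 - T * adjoint T))
  exact this.isSelfAdjoint

lemma norm_defect_sq {T : H →L[ℂ] H} (hT : ‖T‖ ≤ 1) (g : H) :
    ‖defect T g‖ ^ 2 = ‖g‖ ^ 2 - ‖adjoint T g‖ ^ 2 := by
  have hD : adjoint (defect T) = defect T := (defect_isSelfAdjoint T).adjoint_eq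
  have h1 : (inner ℂ (defect T g) (defect T g) : ℂ) = inner ℂ g ((defect T * defect T) g) := by
    rw [ContinuousLinearMap.mul_apply]
    nth_rewrite 1 [← hD]
    rw [ContinuousLinearMap.adjoint_inner_left]
  have h2 : (inner ℂ g (T (adjoint T g)) : ℂ) = inner ℂ (adjoint T g) (adjoint T g) := by
    nth_rewrite 1 [← adjoint_adjoint (A := T)]
    rw [ContinuousLinearMap.adjoint_inner_right]
  rw [defect_sq hT] at h1
  have h0 : (1 - T * adjoint T) g = g - T (adjoint T g) := by
    simp [ContinuousLinearMap.sub_apply, ContinuousLinearMap.mul_apply]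
  rw [h0, inner_sub_right, h2, inner_self_eq_norm_sq_to_K (𝕜 := ℂ),
    inner_self_eq_norm_sq_to_K (𝕜 := ℂ), inner_self_eq_norm_sq_to_K (𝕜 := ℂ)] at h1
  have := congrArg Complex.re h1
  simpa [← Complex.ofReal_pow, Complex.ofReal_re, ← Complex.ofReal_sub] using this

end DefectFacts

section UnitaryExtend

open Module

lemma inner_eq_of_norm_eq {H F F' : Type*} [NormedAddCommGroup H] [InnerProductSpace ℂ H]
    [NormedAddCommGroup F] [InnerProductSpace ℂ F]
    [NormedAddCommGroup F'] [InnerProductSpace ℂ F']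
    (L : H →ₗ[ℂ] F) (L' : H →ₗ[ℂ] F') (hnorm : ∀ u, ‖L u‖ = ‖L' u‖) (g h : H) :
    (inner ℂ (L g) (L h) : ℂ) = inner ℂ (L' g) (L' h) := by
  rw [inner_eq_sum_norm_sq_div_four, inner_eq_sum_norm_sq_div_four]
  have h1 := hnorm (g + h)
  have h2 := hnorm (g - h)
  have h3 := hnorm (g - (RCLike.I : ℂ) • h)
  have h4 := hnorm (g + (RCLike.I : ℂ) • h)
  simp only [map_add, map_sub, map_smul] at h1 h2 h3 h4
  rw [h1, h2, h3, h4]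

lemma unitary_extend {H F : Type*} [NormedAddCommGroup H] [InnerProductSpace ℂ H]
    [NormedAddCommGroup F] [InnerProductSpace ℂ F] [FiniteDimensional ℂ F]
    (L L' : H →ₗ[ℂ] F)
    (hinner : ∀ g h : H, (inner ℂ (L g) (L h) : ℂ) = inner ℂ (L' g) (L' h)) :
    ∃ X : F ≃ₗᵢ[ℂ] F, ∀ g, X (L g) = L' g := by
  classical
  set M : Submodule ℂ F := LinearMap.range L with hM
  set k : ℕ := finrank ℂ M with hk
  set n : ℕ := finrank ℂ F with hn
  have hkn : k ≤ n := M.finrank_le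
  set b : OrthonormalBasis (Fin k) ℂ M := stdOrthonormalBasis ℂ M with hb
  have hbmem : ∀ i, ((b i : F)) ∈ M := fun i => (b i).2
  have hgex : ∀ i : Fin k, ∃ g : H, L g = (b i : F) := fun i => (hbmem i)
  choose g hg using hgex
  set v : Fin n → F := fun j => if h : (j : ℕ) < k then (b ⟨j, h⟩ : F) else 0 with hv
  set w : Fin n → F := fun j => if h : (j : ℕ) < k then L' (g ⟨j, h⟩) else 0 with hw
  set s : Set (Fin n) := {j | (j : ℕ) < k} with hs
  have hbo := b.orthonormal
  rw [orthonormal_iff_ite] at hbo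
  have hvo : Orthonormal ℂ (s.restrict v) := by
    rw [orthonormal_iff_ite]
    rintro ⟨i, hi⟩ ⟨j, hj⟩
    have hvi : v i = (b ⟨i, hi⟩ : F) := dif_pos hi
    have hvj : v j = (b ⟨j, hj⟩ : F) := dif_pos hj
    rw [show s.restrict v ⟨i, hi⟩ = v i from rfl, show s.restrict v ⟨j, hj⟩ = v j from rfl, hvi, hvj]
    rw [← Submodule.coe_inner, hbo ⟨i, hi⟩ ⟨j, hj⟩]
    simp only [Subtype.mk_eq_mk, Fin.mk_eq_mk, Fin.ext_iff]
  have hwo : Orthonormal ℂ (s.restrict w) := by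
    rw [orthonormal_iff_ite]
    rintro ⟨i, hi⟩ ⟨j, hj⟩
    have hwi : w i = L' (g ⟨i, hi⟩) := dif_pos hi
    have hwj : w j = L' (g ⟨j, hj⟩) := dif_pos hj
    rw [show s.restrict w ⟨i, hi⟩ = w i from rfl, show s.restrict w ⟨j, hj⟩ = w j from rfl, hwi, hwj]
    rw [← hinner, hg, hg, ← Submodule.coe_inner, hbo ⟨i, hi⟩ ⟨j, hj⟩]
    simp only [Subtype.mk_eq_mk, Fin.mk_eq_mk, Fin.ext_iff]
  have hcard : finrank ℂ F = Fintype.card (Fin n) := by simp [hn]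
  obtain ⟨β, hβ⟩ := hvo.exists_orthonormalBasis_extension_of_card_eq hcard
  obtain ⟨γ, hγ⟩ := hwo.exists_orthonormalBasis_extension_of_card_eq hcard
  set X : F ≃ₗᵢ[ℂ] F := β.repr.trans γ.repr.symm with hX
  have hXβ : ∀ j, X (β j) = γ j := by
    intro j
    rw [hX]
    simp [LinearIsometryEquiv.trans_apply, OrthonormalBasis.repr_self,
      OrthonormalBasis.repr_symm_single]
  refine ⟨X, fun g0 => ?_⟩
  have hXb : ∀ i : Fin k, X (b i : F) = L' (g i) := by
    intro i
    have hik : ((⟨(i:ℕ), lt_of_lt_of_le i.2 hkn⟩ : Fin n) : ℕ) < k := i.2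
    have h1 : β ⟨(i:ℕ), lt_of_lt_of_le i.2 hkn⟩ = (b i : F) := by
      rw [hβ _ hik]; simp only [hv, dif_pos hik]
    have h2 : γ ⟨(i:ℕ), lt_of_lt_of_le i.2 hkn⟩ = L' (g i) := by
      rw [hγ _ hik]; simp only [hw, dif_pos hik]
    rw [← h1, hXβ, h2]
  set c : Fin k → ℂ := fun i => b.repr ⟨L g0, LinearMap.mem_range_self L g0⟩ i with hc
  have hexp : L g0 = ∑ i, c i • (b i : F) := by
    have := b.sum_repr ⟨L g0, LinearMap.mem_range_self L g0⟩
    have := congrArg (Submodule.subtype M) this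
    simpa using this.symm
  set u : H := ∑ i, c i • g i with hu
  have hLu : L u = L g0 := by
    rw [hu, map_sum, hexp]
    congr 1; ext i; rw [LinearMap.map_smul, hg]
  have hXLu : X (L u) = L' u := by
    rw [hu, map_sum, map_sum, map_sum]
    congr 1; ext i
    rw [LinearMap.map_smul, LinearMap.map_smul, LinearIsometryEquiv.map_smul, hg, hXb]
  have hL'u : L' u = L' g0 := by
    have h0 : L (u - g0) = 0 := by rw [map_sub, hLu, sub_self]
    have : (inner ℂ (L' (u - g0)) (L' (u - g0)) : ℂ) = 0 := by
      rw [← hinner, h0, inner_zero_left]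
    have := inner_self_eq_zero.mp this
    rw [map_sub] at this
    exact sub_eq_zero.mp this
  rw [← hLu, hXLu, hL'u]

end UnitaryExtend

section Gamma

variable {H E : Type*} [NormedAddCommGroup H] [InnerProductSpace ℂ H] [CompleteSpace H]
  [NormedAddCommGroup E] [InnerProductSpace ℂ E] [CompleteSpace E]
variable (R : H →L[ℂ] H) (C : H →L[ℂ] E)

lemma gamma_hasSum (hC : ∀ g, ‖C g‖ ^ 2 = ‖g‖ ^ 2 - ‖R g‖ ^ 2)
    (hpure : ∀ h, Filter.Tendsto (fun n : ℕ => (R ^ n) h) Filter.atTop (nhds 0)) (h : H) :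
    HasSum (fun n : ℕ => ‖C ((R ^ n) h)‖ ^ (2:ℝ)) (‖h‖ ^ 2) := by
  rw [hasSum_iff_tendsto_nat_of_nonneg
    (fun i => Real.rpow_nonneg (norm_nonneg _) _)]
  have hsum : ∀ n : ℕ, ∑ i ∈ Finset.range n, ‖C ((R ^ i) h)‖ ^ (2:ℝ)
      = ‖h‖ ^ 2 - ‖(R ^ n) h‖ ^ 2 := by
    intro n
    induction n with
    | zero => simp
    | succ n ih =>
      rw [Finset.sum_range_succ, ih, rpow_two_eq', hC]
      have : R ((R ^ n) h) = (R ^ (n+1)) h := by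
        rw [pow_succ']; rfl
      rw [this]
      ring
  simp_rw [hsum]
  have h1 : Filter.Tendsto (fun n : ℕ => ‖(R ^ n) h‖ ^ 2) Filter.atTop (nhds 0) := by
    have := ((hpure h).norm).pow 2
    simpa using this
  simpa using tendsto_const_nhds.sub h1

lemma gamma_memℓp (hC : ∀ g, ‖C g‖ ^ 2 = ‖g‖ ^ 2 - ‖R g‖ ^ 2)
    (hpure : ∀ h, Filter.Tendsto (fun n : ℕ => (R ^ n) h) Filter.atTop (nhds 0)) (h : H) :
    Memℓp (fun n : ℕ => C ((R ^ n) h)) 2 := by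
  apply memℓp_gen
  have := (gamma_hasSum R C hC hpure h).summable
  simpa using this

def gammaCLM (hC : ∀ g, ‖C g‖ ^ 2 = ‖g‖ ^ 2 - ‖R g‖ ^ 2)
    (hpure : ∀ h, Filter.Tendsto (fun n : ℕ => (R ^ n) h) Filter.atTop (nhds 0)) :
    H →L[ℂ] lp (fun _ : ℕ => E) 2 :=
  LinearMap.mkContinuous
    { toFun := fun h => ⟨fun n => C ((R ^ n) h), gamma_memℓp R C hC hpure h⟩
      map_add' := by intro f g; apply lp.ext; funext n; simp; rfl
      map_smul' := by intro c f; apply lp.ext; funext n; simp }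
    1
    (by
      intro h
      have h2 : (0 : ℝ) < (2 : ℝ≥0∞).toReal := by norm_num
      rw [one_mul, lp.norm_eq_tsum_rpow h2]
      simp only [LinearMap.coe_mk, AddHom.coe_mk]
      have := (gamma_hasSum R C hC hpure h).tsum_eq
      apply le_of_eq
      calc (∑' n, ‖C ((R ^ n) h)‖ ^ ((2:ℝ≥0∞).toReal)) ^ (1 / (2:ℝ≥0∞).toReal)
          = (‖h‖ ^ 2) ^ ((2:ℝ)⁻¹) := by
            rw [show ((2:ℝ≥0∞).toReal) = (2:ℝ) by norm_num]
            rw [this]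
            norm_num
        _ = ‖h‖ := by
            rw [← rpow_two_eq', ← Real.rpow_mul (norm_nonneg _)]
            norm_num)

variable {R C}

lemma gammaCLM_apply (hC : ∀ g, ‖C g‖ ^ 2 = ‖g‖ ^ 2 - ‖R g‖ ^ 2)
    (hpure : ∀ h, Filter.Tendsto (fun n : ℕ => (R ^ n) h) Filter.atTop (nhds 0)) (h : H)
    (n : ℕ) : ((gammaCLM R C hC hpure h : lp (fun _ : ℕ => E) 2) : ∀ _ : ℕ, E) n
      = C ((R ^ n) h) := rfl

lemma gammaCLM_norm (hC : ∀ g, ‖C g‖ ^ 2 = ‖g‖ ^ 2 - ‖R g‖ ^ 2)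
    (hpure : ∀ h, Filter.Tendsto (fun n : ℕ => (R ^ n) h) Filter.atTop (nhds 0)) (h : H) :
    ‖gammaCLM R C hC hpure h‖ = ‖h‖ := by
  have h2 : (0 : ℝ) < (2 : ℝ≥0∞).toReal := by norm_num
  rw [lp.norm_eq_tsum_rpow h2]
  have ht : (∑' n, ‖((gammaCLM R C hC hpure h) : ∀ _ : ℕ, E) n‖ ^ ((2:ℝ≥0∞).toReal))
      = ‖h‖^2 := by
    rw [show ((2:ℝ≥0∞).toReal) = (2:ℝ) by norm_num]
    simp only [gammaCLM_apply hC hpure]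
    exact (gamma_hasSum R C hC hpure h).tsum_eq
  rw [ht, ← rpow_two_eq', ← Real.rpow_mul (norm_nonneg _)]
  norm_num

lemma gammaCLM_isometry (hC : ∀ g, ‖C g‖ ^ 2 = ‖g‖ ^ 2 - ‖R g‖ ^ 2)
    (hpure : ∀ h, Filter.Tendsto (fun n : ℕ => (R ^ n) h) Filter.atTop (nhds 0)) :
    Isometry (gammaCLM R C hC hpure) :=
  AddMonoidHomClass.isometry_of_norm _ (gammaCLM_norm hC hpure)

lemma gamma_inner_shift (hC : ∀ g, ‖C g‖ ^ 2 = ‖g‖ ^ 2 - ‖R g‖ ^ 2)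
    (hpure : ∀ h, Filter.Tendsto (fun n : ℕ => (R ^ n) h) Filter.atTop (nhds 0)) (h : H)
    (y : lp (fun _ : ℕ => E) 2) :
    (inner ℂ (gammaCLM R C hC hpure h) (shiftOp E y) : ℂ)
      = inner ℂ (gammaCLM R C hC hpure (R h)) y := by
  rw [lp.inner_eq_tsum, lp.inner_eq_tsum]
  rw [(lp.summable_inner (𝕜 := ℂ) (gammaCLM R C hC hpure h) (shiftOp E y)).tsum_eq_zero_add]
  rw [shiftOp_apply_zero, inner_zero_right, zero_add]
  apply tsum_congr
  intro n
  rw [shiftOp_apply_succ]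
  have h1 : ((gammaCLM R C hC hpure h : lp (fun _ : ℕ => E) 2) : ∀ _ : ℕ, E) (n+1)
      = ((gammaCLM R C hC hpure (R h) : lp (fun _ : ℕ => E) 2) : ∀ _ : ℕ, E) n := by
    rw [gammaCLM_apply hC hpure, gammaCLM_apply hC hpure, pow_succ,
      ContinuousLinearMap.mul_apply]
  rw [h1]

lemma gamma_shift_intertwine (hC : ∀ g, ‖C g‖ ^ 2 = ‖g‖ ^ 2 - ‖R g‖ ^ 2)
    (hpure : ∀ h, Filter.Tendsto (fun n : ℕ => (R ^ n) h) Filter.atTop (nhds 0)) :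
    (gammaCLM R C hC hpure) ∘L R = adjoint (shiftOp E) ∘L (gammaCLM R C hC hpure) := by
  refine ContinuousLinearMap.ext fun h => ?_
  refine ext_inner_right ℂ fun x => ?_
  rw [ContinuousLinearMap.comp_apply, ContinuousLinearMap.comp_apply, adjoint_inner_left]
  exact (gamma_inner_shift hC hpure h x).symm

lemma gamma_toep_intertwine (hC : ∀ g, ‖C g‖ ^ 2 = ‖g‖ ^ 2 - ‖R g‖ ^ 2)
    (hpure : ∀ h, Filter.Tendsto (fun n : ℕ => (R ^ n) h) Filter.atTop (nhds 0))
    (a b : E →L[ℂ] E) (R' : H →L[ℂ] H) (hcomm : R' * R = R * R')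
    (hid : ∀ g : H, C (R' g) = adjoint a (C g) + adjoint b (C (R g))) :
    (gammaCLM R C hC hpure) ∘L R' = adjoint (toepOp a b) ∘L (gammaCLM R C hC hpure) := by
  refine ContinuousLinearMap.ext fun h => ?_
  refine ext_inner_right ℂ fun x => ?_
  rw [ContinuousLinearMap.comp_apply, ContinuousLinearMap.comp_apply, adjoint_inner_left]
  have hpt : ∀ n : ℕ,
      (inner ℂ (((gammaCLM R C hC hpure (R' h)) : ∀ _ : ℕ, E) n) ((x : ∀ _ : ℕ, E) n) : ℂ)
      = inner ℂ (((gammaCLM R C hC hpure h) : ∀ _ : ℕ, E) n) ((diagOp a x : ∀ _ : ℕ, E) n)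
        + inner ℂ (((gammaCLM R C hC hpure (R h)) : ∀ _ : ℕ, E) n)
            ((diagOp b x : ∀ _ : ℕ, E) n) := by
    intro n
    have hcn : (R ^ n) (R' h) = R' ((R ^ n) h) := by
      have : Commute R' (R ^ n) := (Commute.pow_right (by exact hcomm) n)
      have := congrArg (fun (A : H →L[ℂ] H) => A h) this.symm
      simpa [ContinuousLinearMap.mul_apply] using this
    rw [gammaCLM_apply hC hpure, gammaCLM_apply hC hpure, gammaCLM_apply hC hpure, hcn, hid,
      inner_add_left, diagOp_apply, diagOp_apply, adjoint_inner_left, adjoint_inner_left]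
    congr 3
    rw [← ContinuousLinearMap.mul_apply, ← pow_succ', pow_succ,
      ContinuousLinearMap.mul_apply]
  rw [lp.inner_eq_tsum]
  calc (∑' n, (inner ℂ (((gammaCLM R C hC hpure (R' h)) : ∀ _ : ℕ, E) n)
        ((x : ∀ _ : ℕ, E) n) : ℂ))
      = ∑' n, ((inner ℂ (((gammaCLM R C hC hpure h) : ∀ _ : ℕ, E) n)
          ((diagOp a x : ∀ _ : ℕ, E) n) : ℂ)
        + inner ℂ (((gammaCLM R C hC hpure (R h)) : ∀ _ : ℕ, E) n)
            ((diagOp b x : ∀ _ : ℕ, E) n)) := tsum_congr hpt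
    _ = (inner ℂ (gammaCLM R C hC hpure h) (diagOp a x) : ℂ)
        + inner ℂ (gammaCLM R C hC hpure (R h)) (diagOp b x) := by
        rw [Summable.tsum_add (lp.summable_inner (𝕜 := ℂ) _ _) (lp.summable_inner (𝕜 := ℂ) _ _),
          lp.inner_eq_tsum, lp.inner_eq_tsum]
    _ = inner ℂ (gammaCLM R C hC hpure h) (toepOp a b x) := by
        rw [← gamma_inner_shift hC hpure h (diagOp b x)]
        have : toepOp a b x = diagOp a x + shiftOp E (diagOp b x) := rfl
        rw [this, inner_add_right]

end Gamma

/-- A pure pair of commuting contractions with finite-dimensional defect spaces dilates to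
a pure pair of commuting isometries: there exist a finite-dimensional Hilbert space `E`, a
unitary `U` and a projection `P` on `E`, and an isometry `Γ : H → ℓ²(ℕ, E)` intertwining
`T₁*, T₂*, (T₁T₂)*` with the adjoints of the Berger–Coburn–Lebow isometries `W_Φ, W_Ψ`
and of the shift `S`. -/
theorem pure_pair_dilates_to_pure_isometries_findim
    {H : Type*} [NormedAddCommGroup H] [InnerProductSpace ℂ H] [CompleteSpace H]
    (T₁ T₂ : H →L[ℂ] H) (hT₁ : ‖T₁‖ ≤ 1) (hT₂ : ‖T₂‖ ≤ 1) (hcomm : Commute T₁ T₂)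
    (hpure : ∀ h : H,
      Filter.Tendsto (fun n : ℕ => ((adjoint (T₁ * T₂)) ^ n) h) Filter.atTop (nhds 0))
    (hfd₁ : FiniteDimensional ℂ ↥(defectClos T₁))
    (hfd₂ : FiniteDimensional ℂ ↥(defectClos T₂)) :
    ∃ (E : Type) (_ : NormedAddCommGroup E) (_ : InnerProductSpace ℂ E)
      (_ : CompleteSpace E) (_ : FiniteDimensional ℂ E) (U P : E →L[ℂ] E),
      (adjoint U * U = 1 ∧ U * adjoint U = 1) ∧
      (IsSelfAdjoint P ∧ P * P = P) ∧
      ∃ (WΦ WΨ : lp (fun _ : ℕ => E) 2 →L[ℂ] lp (fun _ : ℕ => E) 2)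
        (Γ : H →L[ℂ] lp (fun _ : ℕ => E) 2),
        IsToeplitz (P ∘L adjoint U) ((1 - P) ∘L adjoint U) WΦ ∧
        IsToeplitz (U ∘L (1 - P)) (U ∘L P) WΨ ∧
        Isometry Γ ∧
        Γ ∘L adjoint T₁ = adjoint WΦ ∘L Γ ∧
        Γ ∘L adjoint T₂ = adjoint WΨ ∘L Γ ∧
        Γ ∘L adjoint (T₁ * T₂) = adjoint (shiftOp E) ∘L Γ := by
  classical
  -- notation
  set R : H →L[ℂ] H := adjoint (T₁ * T₂) with hRdef
  have hadj_mul : ∀ (A B : H →L[ℂ] H), adjoint (A * B) = adjoint B * adjoint A := by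
    intro A B
    rw [← star_eq_adjoint, ← star_eq_adjoint, ← star_eq_adjoint, star_mul]
  have hR1 : R = adjoint T₂ * adjoint T₁ := hadj_mul T₁ T₂
  have hA12 : adjoint T₁ * adjoint T₂ = adjoint T₂ * adjoint T₁ := by
    have h := congrArg star hcomm.eq
    rw [star_mul, star_mul] at h
    simpa [star_eq_adjoint] using h.symm
  have hR2 : R = adjoint T₁ * adjoint T₂ := by rw [hR1, hA12]
  have hRapp : ∀ g, R g = adjoint T₂ (adjoint T₁ g) := by
    intro g; rw [hR1]; rfl
  have hRapp' : ∀ g, R g = adjoint T₁ (adjoint T₂ g) := by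
    intro g; rw [hR2]; rfl
  have hcommR1 : adjoint T₁ * R = R * adjoint T₁ := by
    rw [hR1, ← mul_assoc, hA12, mul_assoc]
  have hcommR2 : adjoint T₂ * R = R * adjoint T₂ := by
    rw [hR2, ← mul_assoc, ← hA12, mul_assoc]
  -- the defect maps
  have hmem₁ : ∀ x, defect T₁ x ∈ defectClos T₁ := fun x =>
    Submodule.le_topologicalClosure _ (LinearMap.mem_range_self (defect T₁ : H →ₗ[ℂ] H) x)
  have hmem₂ : ∀ x, defect T₂ x ∈ defectClos T₂ := fun x =>
    Submodule.le_topologicalClosure _ (LinearMap.mem_range_self (defect T₂ : H →ₗ[ℂ] H) x)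
  set d₁ : H →L[ℂ] ↥(defectClos T₁) := (defect T₁).codRestrict _ hmem₁ with hd₁def
  set d₂ : H →L[ℂ] ↥(defectClos T₂) := (defect T₂).codRestrict _ hmem₂ with hd₂def
  have hd₁ : ∀ g, ‖d₁ g‖ ^ 2 = ‖g‖ ^ 2 - ‖adjoint T₁ g‖ ^ 2 := by
    intro g
    have : ‖d₁ g‖ = ‖defect T₁ g‖ := rfl
    rw [this]; exact norm_defect_sq hT₁ g
  have hd₂ : ∀ g, ‖d₂ g‖ ^ 2 = ‖g‖ ^ 2 - ‖adjoint T₂ g‖ ^ 2 := by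
    intro g
    have : ‖d₂ g‖ = ‖defect T₂ g‖ := rfl
    rw [this]; exact norm_defect_sq hT₂ g
  -- the finite-dimensional space F
  set F := WithLp 2 (↥(defectClos T₁) × ↥(defectClos T₂)) with hFdef
  haveI : FiniteDimensional ℂ F := inferInstance
  haveI : CompleteSpace F := FiniteDimensional.complete ℂ F
  set toF : (↥(defectClos T₁) × ↥(defectClos T₂)) →L[ℂ] F :=
    (WithLp.prodContinuousLinearEquiv 2 ℂ _ _).symm.toContinuousLinearMap with htoF
  set L : H →L[ℂ] F := toF ∘L (d₁.prod (d₂ ∘L adjoint T₁)) with hLdef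
  set L' : H →L[ℂ] F := toF ∘L ((d₁ ∘L adjoint T₂).prod d₂) with hL'def
  have hLf : ∀ g, (L g).fst = d₁ g := fun g => rfl
  have hLs : ∀ g, (L g).snd = d₂ (adjoint T₁ g) := fun g => rfl
  have hL'f : ∀ g, (L' g).fst = d₁ (adjoint T₂ g) := fun g => rfl
  have hL's : ∀ g, (L' g).snd = d₂ g := fun g => rfl
  -- norm identities
  have hLnorm : ∀ g, ‖L g‖ ^ 2 = ‖g‖ ^ 2 - ‖R g‖ ^ 2 := by
    intro g
    rw [WithLp.prod_norm_sq_eq_of_L2, hLf, hLs, hd₁ g, hd₂ (adjoint T₁ g), hRapp g]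
    ring
  have hL'norm : ∀ g, ‖L' g‖ ^ 2 = ‖g‖ ^ 2 - ‖R g‖ ^ 2 := by
    intro g
    rw [WithLp.prod_norm_sq_eq_of_L2, hL'f, hL's, hd₁ (adjoint T₂ g), hd₂ g, hRapp' g]
    ring
  have hnormEq : ∀ u, ‖(L : H →ₗ[ℂ] F) u‖ = ‖(L' : H →ₗ[ℂ] F) u‖ := by
    intro u
    have h1 : ‖L u‖ ^ 2 = ‖L' u‖ ^ 2 := by rw [hLnorm, hL'norm]
    have h2 := congrArg Real.sqrt h1
    rw [Real.sqrt_sq (norm_nonneg _), Real.sqrt_sq (norm_nonneg _)] at h2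
    exact h2
  obtain ⟨X, hX⟩ := unitary_extend (L : H →ₗ[ℂ] F) (L' : H →ₗ[ℂ] F)
    (inner_eq_of_norm_eq _ _ hnormEq)
  have hX' : ∀ g, X (L g) = L' g := hX
  -- the projection onto the second coordinate
  set P : F →L[ℂ] F := toF ∘L
      (ContinuousLinearMap.prod 0 (ContinuousLinearMap.snd ℂ _ _)) ∘L
      (WithLp.prodContinuousLinearEquiv 2 ℂ _ _).toContinuousLinearMap with hPdef
  have hPf : ∀ x : F, (P x).fst = 0 := fun x => rfl
  have hPs : ∀ x : F, (P x).snd = x.snd := fun x => rfl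
  have hPP : P ∘L P = P := ContinuousLinearMap.ext fun x => rfl
  have hPsa : IsSelfAdjoint P := by
    rw [ContinuousLinearMap.isSelfAdjoint_iff']
    symm
    rw [ContinuousLinearMap.eq_adjoint_iff]
    intro x y
    rw [WithLp.prod_inner_apply, WithLp.prod_inner_apply]
    simp only [WithLp.ofLp_fst, WithLp.ofLp_snd]
    rw [hPf, hPs, hPf, hPs]
    simp
  -- U on F
  set UF : F →L[ℂ] F := X.symm.toLinearIsometry.toContinuousLinearMap with hUFdef
  set XC : F →L[ℂ] F := X.toLinearIsometry.toContinuousLinearMap with hXCdef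
  have hXCapp : ∀ z : F, XC z = X z := fun z => rfl
  have hUFapp : ∀ z : F, UF z = X.symm z := fun z => rfl
  have hUFadj : adjoint UF = XC := by
    symm
    rw [ContinuousLinearMap.eq_adjoint_iff]
    intro x y
    rw [hXCapp, hUFapp, LinearIsometryEquiv.inner_map_eq_flip]
  have hXUF : XC ∘L UF = 1 := ContinuousLinearMap.ext fun z => by
    rw [ContinuousLinearMap.comp_apply, hXCapp, hUFapp, X.apply_symm_apply]; rfl
  have hUFX : UF ∘L XC = 1 := ContinuousLinearMap.ext fun z => by
    rw [ContinuousLinearMap.comp_apply, hXCapp, hUFapp, X.symm_apply_apply]; rfl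
  -- the two key identities on F
  have key1 : ∀ g, L' (adjoint T₁ g) = P (L g) + (1 - P) (L (R g)) := by
    intro g
    have haddf : (P (L g) + (1 - P) (L (R g))).fst
        = (P (L g)).fst + ((L (R g)).fst - (P (L (R g))).fst) := rfl
    have hadds : (P (L g) + (1 - P) (L (R g))).snd
        = (P (L g)).snd + ((L (R g)).snd - (P (L (R g))).snd) := rfl
    refine WithLp.ofLp_injective 2 (Prod.ext ?_ ?_) <;> simp only [WithLp.ofLp_fst, WithLp.ofLp_snd]
    · rw [haddf, hPf, hPf, hL'f, hLf, zero_add, sub_zero, hRapp g]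
    · rw [hadds, hPs, hPs, hL's, hLs, hLs, sub_self, add_zero]
  have key2 : ∀ g, L (adjoint T₂ g) = (1 - P) (XC (L g)) + P (XC (L (R g))) := by
    intro g
    have h1 : XC (L g) = L' g := by rw [hXCapp]; exact hX' g
    have h2 : XC (L (R g)) = L' (R g) := by rw [hXCapp]; exact hX' (R g)
    rw [h1, h2]
    have haddf : ((1 - P) (L' g) + P (L' (R g))).fst
        = ((L' g).fst - (P (L' g)).fst) + (P (L' (R g))).fst := rfl
    have hadds : ((1 - P) (L' g) + P (L' (R g))).snd
        = ((L' g).snd - (P (L' g)).snd) + (P (L' (R g))).snd := rfl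
    refine WithLp.ofLp_injective 2 (Prod.ext ?_ ?_) <;> simp only [WithLp.ofLp_fst, WithLp.ofLp_snd]
    · rw [haddf, hPf, hPf, hLf, hL'f, sub_zero, add_zero]
    · rw [hadds, hPs, hPs, hLs, hL's, hL's, sub_self, zero_add, hRapp' g]
  have hid1F : ∀ g, L (adjoint T₁ g) = UF (P (L g)) + UF ((1 - P) (L (R g))) := by
    intro g
    apply X.injective
    rw [map_add, hUFapp, hUFapp, X.apply_symm_apply, X.apply_symm_apply]
    rw [show X (L (adjoint T₁ g)) = L' (adjoint T₁ g) from hX' _]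
    exact key1 g
  -- move to a Type-0 model space
  set n : ℕ := Module.finrank ℂ F with hndef
  set e : F ≃ₗᵢ[ℂ] EuclideanSpace ℂ (Fin n) := (stdOrthonormalBasis ℂ F).repr with hedef
  set eC : F →L[ℂ] EuclideanSpace ℂ (Fin n) := e.toLinearIsometry.toContinuousLinearMap
    with heCdef
  set eC' : EuclideanSpace ℂ (Fin n) →L[ℂ] F := e.symm.toLinearIsometry.toContinuousLinearMap
    with heC'def
  have heCapp : ∀ z : F, eC z = e z := fun z => rfl
  have heC'app : ∀ z, eC' z = e.symm z := fun z => rfl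
  have hee' : eC ∘L eC' = 1 := ContinuousLinearMap.ext fun z => by
    rw [ContinuousLinearMap.comp_apply, heCapp, heC'app, e.apply_symm_apply]; rfl
  have he'e : eC' ∘L eC = 1 := ContinuousLinearMap.ext fun z => by
    rw [ContinuousLinearMap.comp_apply, heCapp, heC'app, e.symm_apply_apply]; rfl
  have hadj_eC : adjoint eC = eC' := by
    symm
    rw [ContinuousLinearMap.eq_adjoint_iff]
    intro x y
    rw [heCapp, heC'app]
    rw [show (e.symm : EuclideanSpace ℂ (Fin n) ≃ₗᵢ[ℂ] F) x = e.symm x from rfl]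
    rw [LinearIsometryEquiv.inner_map_eq_flip]
    simp
  have hadj_eC' : adjoint eC' = eC := by
    rw [← hadj_eC, adjoint_adjoint]
  -- conjugation by e
  set conj : (F →L[ℂ] F) → (EuclideanSpace ℂ (Fin n) →L[ℂ] EuclideanSpace ℂ (Fin n)) :=
    fun A => eC ∘L A ∘L eC' with hconjdef
  have hconj_app : ∀ (A : F →L[ℂ] F) (z : F), conj A (eC z) = eC (A z) := by
    intro A z
    rw [hconjdef]
    simp only [ContinuousLinearMap.comp_apply, heCapp, heC'app, e.symm_apply_apply]
  have hconj_mul : ∀ A B : F →L[ℂ] F, conj A * conj B = conj (A ∘L B) := by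
    intro A B
    rw [hconjdef]
    refine ContinuousLinearMap.ext fun z => ?_
    simp only [ContinuousLinearMap.mul_apply, ContinuousLinearMap.comp_apply, heCapp,
      heC'app, e.symm_apply_apply]
  have hconj_adj : ∀ A : F →L[ℂ] F, adjoint (conj A) = conj (adjoint A) := by
    intro A
    rw [hconjdef]
    simp only []
    rw [adjoint_comp, adjoint_comp, hadj_eC, hadj_eC']
    rfl
  have hconj_one : conj 1 = 1 := by
    show eC ∘L ((1 : F →L[ℂ] F) ∘L eC') = 1
    rw [ContinuousLinearMap.one_def, ContinuousLinearMap.id_comp, hee']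
  have hconj_sub : conj (1 - P) = 1 - conj P := by
    show eC ∘L ((1 - P) ∘L eC') = 1 - eC ∘L (P ∘L eC')
    rw [ContinuousLinearMap.sub_comp, ContinuousLinearMap.comp_sub,
      ContinuousLinearMap.one_def, ContinuousLinearMap.id_comp, hee']
  -- final operators on E
  set UE : EuclideanSpace ℂ (Fin n) →L[ℂ] EuclideanSpace ℂ (Fin n) := conj UF with hUEdef
  set PE : EuclideanSpace ℂ (Fin n) →L[ℂ] EuclideanSpace ℂ (Fin n) := conj P with hPEdef
  have hUEadj : adjoint UE = conj XC := by rw [hUEdef, hconj_adj, hUFadj]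
  have hU1 : adjoint UE * UE = 1 := by
    rw [hUEadj, hUEdef, hconj_mul, hXUF, hconj_one]
  have hU2 : UE * adjoint UE = 1 := by
    rw [hUEadj, hUEdef, hconj_mul, hUFX, hconj_one]
  have hPEsa : IsSelfAdjoint PE := by
    rw [IsSelfAdjoint, star_eq_adjoint, hPEdef, hconj_adj, hPsa.adjoint_eq]
  have hPEP : PE * PE = PE := by
    rw [hPEdef, hconj_mul, hPP]
  have hPEsub : 1 - PE = conj (1 - P) := by rw [hconj_sub, hPEdef]
  -- the isometric embedding coefficient map
  set C : H →L[ℂ] EuclideanSpace ℂ (Fin n) := eC ∘L L with hCdef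
  have hCapp : ∀ g, C g = eC (L g) := fun g => rfl
  have hCnorm : ∀ g, ‖C g‖ ^ 2 = ‖g‖ ^ 2 - ‖R g‖ ^ 2 := by
    intro g
    have h1 : ‖C g‖ = ‖L g‖ := by
      rw [hCapp, heCapp]; exact e.norm_map _
    rw [h1]; exact hLnorm g
  -- adjoints of the Toeplitz symbols
  have hone_sub_sa : IsSelfAdjoint (1 - PE) := by
    rw [ContinuousLinearMap.isSelfAdjoint_iff']
    rw [map_sub, hPEsa.adjoint_eq]
    congr 1
    rw [ContinuousLinearMap.one_def]
    exact ContinuousLinearMap.adjoint_id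
  have hadj_a₁ : adjoint (PE ∘L adjoint UE) = UE ∘L PE := by
    rw [adjoint_comp, adjoint_adjoint, hPEsa.adjoint_eq]
  have hadj_b₁ : adjoint ((1 - PE) ∘L adjoint UE) = UE ∘L (1 - PE) := by
    rw [adjoint_comp, adjoint_adjoint, hone_sub_sa.adjoint_eq]
  have hadj_a₂ : adjoint (UE ∘L (1 - PE)) = (1 - PE) ∘L adjoint UE := by
    rw [adjoint_comp, hone_sub_sa.adjoint_eq]
  have hadj_b₂ : adjoint (UE ∘L PE) = PE ∘L adjoint UE := by
    rw [adjoint_comp, hPEsa.adjoint_eq]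
  -- intertwining identities at the level of coefficients
  have hid1E : ∀ g, C (adjoint T₁ g)
      = adjoint (PE ∘L adjoint UE) (C g)
        + adjoint ((1 - PE) ∘L adjoint UE) (C (R g)) := by
    intro g
    rw [hadj_a₁, hadj_b₁]
    have e1 : (UE ∘L PE) (C g) = eC (UF (P (L g))) := by
      rw [← ContinuousLinearMap.mul_def, hUEdef, hPEdef, hconj_mul, hCapp, hconj_app]
      rfl
    have e2 : (UE ∘L (1 - PE)) (C (R g)) = eC (UF ((1 - P) (L (R g)))) := by
      rw [← ContinuousLinearMap.mul_def, hPEsub, hUEdef, hconj_mul, hCapp, hconj_app]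
      rfl
    rw [e1, e2, hCapp, ← map_add]
    exact congrArg eC (hid1F g)
  have hid2E : ∀ g, C (adjoint T₂ g)
      = adjoint (UE ∘L (1 - PE)) (C g)
        + adjoint (UE ∘L PE) (C (R g)) := by
    intro g
    rw [hadj_a₂, hadj_b₂]
    have e1 : ((1 - PE) ∘L adjoint UE) (C g) = eC ((1 - P) (XC (L g))) := by
      rw [← ContinuousLinearMap.mul_def, hPEsub, hUEadj, hconj_mul, hCapp, hconj_app]
      rfl
    have e2 : (PE ∘L adjoint UE) (C (R g)) = eC (P (XC (L (R g)))) := by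
      rw [← ContinuousLinearMap.mul_def, hPEdef, hUEadj, hconj_mul, hCapp, hconj_app]
      rfl
    rw [e1, e2, hCapp, ← map_add]
    exact congrArg eC (key2 g)
  -- assemble
  refine ⟨EuclideanSpace ℂ (Fin n), inferInstance, inferInstance, inferInstance,
    inferInstance, UE, PE, ⟨hU1, hU2⟩, ⟨hPEsa, hPEP⟩,
    toepOp (PE ∘L adjoint UE) ((1 - PE) ∘L adjoint UE),
    toepOp (UE ∘L (1 - PE)) (UE ∘L PE),
    gammaCLM R C hCnorm hpure,
    isToeplitz_toepOp _ _, isToeplitz_toepOp _ _,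
    gammaCLM_isometry hCnorm hpure,
    gamma_toep_intertwine hCnorm hpure _ _ _ hcommR1 hid1E,
    gamma_toep_intertwine hCnorm hpure _ _ _ hcommR2 hid2E,
    gamma_shift_intertwine hCnorm hpure⟩
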